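/- Let Q be a positive definite real n×n matrix, P a positive definite real m×m matrix, F a real n×m matrix, and fix vectors x̂ ∈ ℝᵐ, ν ∈ ℝⁿ, and x₂ ∈ ℝⁿ. Define c(x₁) := (x₂ − F x₁ − ν)ᵀ Q⁻¹ (x₂ − F x₁ − ν) + (x₁ − x̂)ᵀ P⁻¹ (x₁ − x̂) and let d := x₂ − F x̂ − ν. Then for every x₁ ∈ ℝᵐ, c(x₁) ≥ dᵀ (Q + F P Fᵀ)⁻¹ d, and equality holds for x₁* := x̂ + (P⁻¹ + Fᵀ Q⁻¹ F)⁻¹ Fᵀ Q⁻¹ d. -/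

import Mathlib

open Matrix

/-- Marginalizing the previous state out of the joint prediction cost yields the
predicted quadratic prior: `c(x₁) ≥ dᵀ (Q + F P Fᵀ)⁻¹ d` with equality at
`x₁* = x̂ + (P⁻¹ + Fᵀ Q⁻¹ F)⁻¹ Fᵀ Q⁻¹ d`. -/
theorem prediction_marginalization {n m : ℕ}
    (Q : Matrix (Fin n) (Fin n) ℝ) (P : Matrix (Fin m) (Fin m) ℝ)
    (F : Matrix (Fin n) (Fin m) ℝ) (hQ : Q.PosDef) (hP : P.PosDef)
    (xhat : Fin m → ℝ) (ν : Fin n → ℝ) (x₂ : Fin n → ℝ)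
    (c : (Fin m → ℝ) → ℝ)
    (hc : c = fun x₁ => (x₂ - F *ᵥ x₁ - ν) ⬝ᵥ (Q⁻¹ *ᵥ (x₂ - F *ᵥ x₁ - ν))
      + (x₁ - xhat) ⬝ᵥ (P⁻¹ *ᵥ (x₁ - xhat)))
    (d : Fin n → ℝ) (hd : d = x₂ - F *ᵥ xhat - ν) :
    (∀ x₁ : Fin m → ℝ, c x₁ ≥ d ⬝ᵥ ((Q + F * P * Fᵀ)⁻¹ *ᵥ d)) ∧
    c (xhat + (P⁻¹ + Fᵀ * Q⁻¹ * F)⁻¹ *ᵥ (Fᵀ *ᵥ (Q⁻¹ *ᵥ d)))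
      = d ⬝ᵥ ((Q + F * P * Fᵀ)⁻¹ *ᵥ d) := by
  subst hc
  -- symmetric-matrix swap lemma
  have swap : ∀ {k : ℕ} (A : Matrix (Fin k) (Fin k) ℝ), Aᵀ = A →
      ∀ x y : Fin k → ℝ, x ⬝ᵥ (A *ᵥ y) = y ⬝ᵥ (A *ᵥ x) := by
    intro k A hA x y
    rw [dotProduct_mulVec, ← mulVec_transpose, hA, dotProduct_comm]
  have hcross : ∀ (u : Fin m → ℝ) (z : Fin n → ℝ),
      (F *ᵥ u) ⬝ᵥ z = u ⬝ᵥ (Fᵀ *ᵥ z) := by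
    intro u z
    rw [dotProduct_comm, dotProduct_mulVec, ← mulVec_transpose, dotProduct_comm]
  -- symmetry of Q⁻¹ and S
  have hQi : Q⁻¹ᵀ = Q⁻¹ := by
    have h := hQ.inv.isHermitian
    simpa [Matrix.IsHermitian] using h
  set S : Matrix (Fin m) (Fin m) ℝ := P⁻¹ + Fᵀ * Q⁻¹ * F with hSdef
  have hFQ : (Fᵀ * Q⁻¹ * F).PosSemidef := by
    simpa using hQ.inv.posSemidef.conjTranspose_mul_mul_same F
  have hS : S.PosDef := hP.inv.add_posSemidef hFQ
  have hSsym : Sᵀ = S := by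
    have h := hS.isHermitian
    simpa [Matrix.IsHermitian] using h
  -- Woodbury
  have hW : (Q + F * P * Fᵀ)⁻¹ = Q⁻¹ - Q⁻¹ * F * S⁻¹ * Fᵀ * Q⁻¹ :=
    Matrix.add_mul_mul_inv_eq_sub Q F P Fᵀ hQ.isUnit hP.isUnit hS.isUnit
  set v : Fin m → ℝ := Fᵀ *ᵥ (Q⁻¹ *ᵥ d) with hvdef
  set w : Fin m → ℝ := S⁻¹ *ᵥ v with hwdef
  have hSw : S *ᵥ w = v := by
    rw [hwdef, mulVec_mulVec, mul_nonsing_inv _ ((Matrix.isUnit_iff_isUnit_det S).1 hS.isUnit),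
      one_mulVec]
  -- value of the marginal term
  have hmarg : d ⬝ᵥ ((Q + F * P * Fᵀ)⁻¹ *ᵥ d) = d ⬝ᵥ (Q⁻¹ *ᵥ d) - w ⬝ᵥ v := by
    rw [hW, sub_mulVec, dotProduct_sub]
    congr 1
    have : (Q⁻¹ * F * S⁻¹ * Fᵀ * Q⁻¹) *ᵥ d = Q⁻¹ *ᵥ (F *ᵥ w) := by
      simp only [hwdef, hvdef, ← mulVec_mulVec]
    rw [this, swap Q⁻¹ hQi, hcross]
  -- the key completion-of-squares identity (for arbitrary u)
  have key0 : ∀ u : Fin m → ℝ,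
      (d - F *ᵥ u) ⬝ᵥ (Q⁻¹ *ᵥ (d - F *ᵥ u)) + u ⬝ᵥ (P⁻¹ *ᵥ u)
        = (u - w) ⬝ᵥ (S *ᵥ (u - w)) + (d ⬝ᵥ (Q⁻¹ *ᵥ d) - w ⬝ᵥ v) := by
    intro u
    have expand1 : (d - F *ᵥ u) ⬝ᵥ (Q⁻¹ *ᵥ (d - F *ᵥ u))
        = d ⬝ᵥ (Q⁻¹ *ᵥ d) - 2 * (u ⬝ᵥ v) + u ⬝ᵥ ((Fᵀ * Q⁻¹ * F) *ᵥ u) := by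
      rw [mulVec_sub, dotProduct_sub, sub_dotProduct, sub_dotProduct]
      rw [swap Q⁻¹ hQi d (F *ᵥ u), hcross u (Q⁻¹ *ᵥ d), ← hvdef]
      rw [hcross u (Q⁻¹ *ᵥ (F *ᵥ u))]
      simp only [mulVec_mulVec, Matrix.mul_assoc]
      ring
    have expand2 : (u - w) ⬝ᵥ (S *ᵥ (u - w))
        = u ⬝ᵥ (S *ᵥ u) - 2 * (u ⬝ᵥ v) + w ⬝ᵥ v := by
      rw [mulVec_sub, dotProduct_sub, sub_dotProduct, sub_dotProduct]
      rw [swap S hSsym w u, hSw]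
      ring
    have expand3 : u ⬝ᵥ (S *ᵥ u) = u ⬝ᵥ ((Fᵀ * Q⁻¹ * F) *ᵥ u) + u ⬝ᵥ (P⁻¹ *ᵥ u) := by
      rw [hSdef, add_mulVec, dotProduct_add]
      ring
    rw [expand1, expand2, expand3]
    ring
  have key : ∀ x₁ : Fin m → ℝ,
      (x₂ - F *ᵥ x₁ - ν) ⬝ᵥ (Q⁻¹ *ᵥ (x₂ - F *ᵥ x₁ - ν)) + (x₁ - xhat) ⬝ᵥ (P⁻¹ *ᵥ (x₁ - xhat))
        = ((x₁ - xhat) - w) ⬝ᵥ (S *ᵥ ((x₁ - xhat) - w))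
          + d ⬝ᵥ ((Q + F * P * Fᵀ)⁻¹ *ᵥ d) := by
    intro x₁
    have hres : x₂ - F *ᵥ x₁ - ν = d - F *ᵥ (x₁ - xhat) := by
      rw [hd, mulVec_sub]
      abel
    rw [hres, hmarg]
    exact key0 (x₁ - xhat)
  constructor
  · intro x₁
    have h1 := key x₁
    have hnn : 0 ≤ ((x₁ - xhat) - w) ⬝ᵥ (S *ᵥ ((x₁ - xhat) - w)) := by
      have := hS.posSemidef.dotProduct_mulVec_nonneg ((x₁ - xhat) - w)
      simpa using this
    simp only [ge_iff_le]
    calc d ⬝ᵥ ((Q + F * P * Fᵀ)⁻¹ *ᵥ d)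
        ≤ ((x₁ - xhat) - w) ⬝ᵥ (S *ᵥ ((x₁ - xhat) - w)) + d ⬝ᵥ ((Q + F * P * Fᵀ)⁻¹ *ᵥ d) := by
          linarith
      _ = _ := h1.symm
  · have h1 := key (xhat + w)
    have h2 : (xhat + w - xhat) - w = 0 := by abel
    rw [h2] at h1
    simpa using h1
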